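/- arXiv:0904.1118 — 3 statements merged into one kernel-verified Lean document; each statement's English description precedes it below -/
import Mathlib

section
/- For real numbers a < b, the function δ_{a,b}(t) = (b·e^{bt} − a·e^{at})/(e^{bt} − e^{at}) − 1/t is strictly increasing on (0, ∞). -/
lemma key_ineq {x : ℝ} (hx : 0 < x) : x ^ 2 * Real.exp x < (Real.exp x - 1) ^ 2 := by
  have h0 : x / 2 < Real.sinh (x / 2) := Real.self_lt_sinh_iff.mpr (by linarith)
  rw [Real.sinh_eq] at h0
  have he : Real.exp (x / 2) * Real.exp (x / 2) = Real.exp x := by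
    rw [← Real.exp_add]; ring_nf
  have he2 : Real.exp (-(x / 2)) * Real.exp (x / 2) = 1 := by
    rw [← Real.exp_add]; simp
  have h1 : x * Real.exp (x / 2) < Real.exp x - 1 := by
    nlinarith [Real.exp_pos (x / 2)]
  have hpos : 0 < x * Real.exp (x / 2) := by positivity
  nlinarith

lemma f_strictMono : StrictMonoOn (fun x : ℝ => 1 / (Real.exp x - 1) - 1 / x) (Set.Ioi 0) := by
  have hne : ∀ x : ℝ, x ∈ Set.Ioi (0:ℝ) → Real.exp x - 1 ≠ 0 := by
    intro x hx
    have : (1:ℝ) < Real.exp x := Real.one_lt_exp_iff.mpr (Set.mem_Ioi.mp hx)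
    linarith
  apply strictMonoOn_of_deriv_pos (convex_Ioi 0)
  · apply ContinuousOn.sub
    · exact continuousOn_const.div
        (Real.continuous_exp.continuousOn.sub continuousOn_const) hne
    · exact continuousOn_const.div continuousOn_id (fun x hx => ne_of_gt hx)
  · intro x hx
    rw [interior_Ioi] at hx
    have hx0 : 0 < x := hx
    have hne' : Real.exp x - 1 ≠ 0 := hne x hx
    have hd : HasDerivAt (fun x : ℝ => 1 / (Real.exp x - 1) - 1 / x)
        (-(Real.exp x) / (Real.exp x - 1) ^ 2 - (-1 / x ^ 2)) x := by
      have h1 : HasDerivAt (fun x : ℝ => (Real.exp x - 1)⁻¹)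
          (-(Real.exp x) / (Real.exp x - 1) ^ 2) x :=
        ((Real.hasDerivAt_exp x).sub_const 1).inv hne'
      have h2 : HasDerivAt (fun x : ℝ => x⁻¹) (-1 / x ^ 2) x := by
        exact (hasDerivAt_id' x).inv hx0.ne'
      simpa [one_div, Pi.sub_def] using h1.sub h2
    rw [hd.deriv]
    have hk := key_ineq hx0
    have hden : 0 < (Real.exp x - 1) ^ 2 := by
      have : (1:ℝ) < Real.exp x := Real.one_lt_exp_iff.mpr hx0
      positivity
    have hx2 : 0 < x ^ 2 := by positivity
    rw [sub_pos, div_lt_div_iff₀ hx2 hden]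
    nlinarith [Real.exp_pos x]

theorem delta_strictMonoOn (a b : ℝ) (hab : a < b) :
    StrictMonoOn (fun t : ℝ =>
      (b * Real.exp (b * t) - a * Real.exp (a * t)) /
        (Real.exp (b * t) - Real.exp (a * t)) - 1 / t)
      (Set.Ioi (0 : ℝ)) := by
  set c := b - a with hc_def
  have hc : 0 < c := sub_pos.mpr hab
  have key : ∀ t : ℝ, t ∈ Set.Ioi (0:ℝ) →
      (b * Real.exp (b * t) - a * Real.exp (a * t)) /
        (Real.exp (b * t) - Real.exp (a * t)) - 1 / t
      = b + c * (1 / (Real.exp (c * t) - 1) - 1 / (c * t)) := by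
    intro t ht
    have ht0 : 0 < t := ht
    have hEb : Real.exp (b * t) = Real.exp (a * t) * Real.exp (c * t) := by
      rw [← Real.exp_add, hc_def]; ring_nf
    have hEc : (1:ℝ) < Real.exp (c * t) := by
      exact Real.one_lt_exp_iff.mpr (by positivity)
    have hden : Real.exp (b * t) - Real.exp (a * t) ≠ 0 := by
      rw [hEb]
      have := Real.exp_pos (a * t)
      nlinarith
    have hc1 : Real.exp (c * t) - 1 ≠ 0 := by linarith
    have hEa := (Real.exp_pos (a * t)).ne'
    field_simp
    rw [hEb]
    rw [mul_comm t a, mul_comm t c]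
    have h3 : Real.exp (a * t) * Real.exp (c * t) - Real.exp (a * t) = Real.exp (a * t) * (Real.exp (c * t) - 1) := by ring
    rw [h3]
    field_simp
    have hI : (Real.exp (t * c) - 1) * (Real.exp (t * c) - 1)⁻¹ = 1 := mul_inv_cancel₀ (by rwa [mul_comm t c])
    rw [div_eq_mul_inv, div_eq_mul_inv]
    linear_combination (t * b) * hI - t * (Real.exp (t * c) - 1)⁻¹ * hc_def
  intro s hs t ht hst
  simp only
  rw [key s hs, key t ht]
  have harg : c * s < c * t := by exact mul_lt_mul_of_pos_left hst hc
  have h1 : c * s ∈ Set.Ioi (0:ℝ) := Set.mem_Ioi.mpr (mul_pos hc hs)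
  have h2 : c * t ∈ Set.Ioi (0:ℝ) := Set.mem_Ioi.mpr (mul_pos hc ht)
  have := f_strictMono h1 h2 harg
  simp only at this
  nlinarith
end

section
/- For real numbers a < b with a + b ≥ 0 and any 0 < τ < 1, the inequality τ·δ_{a,b}(t) < δ_{a,b}(τt) holds for all t > 0; that is, the function −δ_{a,b} is star-shaped on (0, ∞). -/
open Real

lemma pos_of_deriv_pos (f f' : ℝ → ℝ) (hd : ∀ x, HasDerivAt f (f' x) x)
    (h0 : f 0 = 0) (hp : ∀ x, 0 < x → 0 < f' x) : ∀ x, 0 < x → 0 < f x := by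
  intro x hx
  have hmono : StrictMonoOn f (Set.Ici 0) := by
    apply strictMonoOn_of_deriv_pos (convex_Ici 0)
    · exact fun y _ => (hd y).continuousAt.continuousWithinAt
    · intro y hy
      rw [interior_Ici] at hy
      rw [(hd y).deriv]
      exact hp y hy
  have := hmono (Set.self_mem_Ici) (le_of_lt hx : (0:ℝ) ≤ x) hx
  simpa [h0] using this

lemma f6_pos : ∀ x : ℝ, 0 < x →
    0 < (64*x - 64)*(exp x)^2 + (2*x^2+24*x+68)*exp x := by
  intro x hx
  have he : 0 < exp x := exp_pos x
  have hrw : (64*x - 64)*(exp x)^2 + (2*x^2+24*x+68)*exp x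
      = exp x * ((64*x-64)*exp x + (2*x^2+24*x+68)) := by ring
  rw [hrw]
  apply mul_pos he
  rcases le_or_gt 1 x with h1 | h1
  · nlinarith [mul_nonneg (by linarith : (0:ℝ) ≤ 64*x-64) he.le, sq_nonneg x, hx]
  · have key : exp x * (1 - x) ≤ 1 := by
      have h2 := Real.add_one_le_exp (-x)
      have h3 : exp (-x) = 1 / exp x := by rw [Real.exp_neg, one_div]
      have h4 : 1 - x ≤ 1 / exp x := by rw [← h3]; linarith
      calc exp x * (1 - x) ≤ exp x * (1 / exp x) := mul_le_mul_of_nonneg_left h4 he.le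
        _ = 1 := by field_simp
    nlinarith [key, sq_nonneg x, hx]

lemma hasDerivAt_shape (A B C D E : ℝ) (x : ℝ) :
    HasDerivAt (fun y : ℝ => (A*y + B)*(exp y)^2 + (C*y^2 + D*y + E)*exp y)
      ((2*A*x + (A+2*B))*(exp x)^2 + (C*x^2 + (2*C+D)*x + (D+E))*exp x) x := by
  have hexp := Real.hasDerivAt_exp x
  have hsq := hexp.pow 2
  have hp1 : HasDerivAt (fun y : ℝ => A*y + B) A x := by
    simpa using ((hasDerivAt_id x).const_mul A).add_const B
  have hp2 : HasDerivAt (fun y : ℝ => C*y^2 + D*y + E) (2*C*x + D) x := by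
    have h1 := (hasDerivAt_pow 2 x).const_mul C
    have h2 := (hasDerivAt_id x).const_mul D
    have := (h1.add h2).add_const E
    refine this.congr_deriv ?_
    simp; ring
  have total := (hp1.mul hsq).add (hp2.mul hexp)
  refine total.congr_deriv ?_
  simp only [Pi.pow_apply]
  push_cast
  ring

lemma level (A B C D E A' B' C' D' E' : ℝ)
    (hA : A' = 2*A) (hB : B' = A + 2*B) (hC : C' = C) (hD : D' = 2*C + D) (hE : E' = D + E)
    (h0 : B + E = 0)
    (hnext : ∀ x, 0 < x → 0 < (A'*x + B')*(exp x)^2 + (C'*x^2 + D'*x + E')*exp x) :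
    ∀ x, 0 < x → 0 < (A*x + B)*(exp x)^2 + (C*x^2 + D*x + E)*exp x := by
  apply pos_of_deriv_pos _ (fun x => (A'*x + B')*(exp x)^2 + (C'*x^2 + D'*x + E')*exp x)
  · intro x
    have h := hasDerivAt_shape A B C D E x
    convert h using 2 <;> (subst hA hB hC hD hE; ring)
  · simp [Real.exp_zero]; linarith
  · exact hnext

lemma f6_pos' : ∀ x, 0 < x → 0 < ((64:ℝ)*x + (-64))*(exp x)^2 + (2*x^2 + 24*x + 68)*exp x := by
  intro x hx
  have := f6_pos x hx
  nlinarith [this]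

lemma f5_pos : ∀ x, 0 < x → 0 < ((32:ℝ)*x + (-48))*(exp x)^2 + (2*x^2 + 20*x + 48)*exp x :=
  level 32 (-48) 2 20 48 64 (-64) 2 24 68 (by norm_num) (by norm_num) (by norm_num) (by norm_num) (by norm_num) (by norm_num) f6_pos'

lemma f4_pos : ∀ x, 0 < x → 0 < ((16:ℝ)*x + (-32))*(exp x)^2 + (2*x^2 + 16*x + 32)*exp x :=
  level 16 (-32) 2 16 32 32 (-48) 2 20 48 (by norm_num) (by norm_num) (by norm_num) (by norm_num) (by norm_num) (by norm_num) f5_pos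

lemma f3_pos : ∀ x, 0 < x → 0 < ((8:ℝ)*x + (-20))*(exp x)^2 + (2*x^2 + 12*x + 20)*exp x :=
  level 8 (-20) 2 12 20 16 (-32) 2 16 32 (by norm_num) (by norm_num) (by norm_num) (by norm_num) (by norm_num) (by norm_num) f4_pos

lemma f2_pos : ∀ x, 0 < x → 0 < ((4:ℝ)*x + (-12))*(exp x)^2 + (2*x^2 + 8*x + 12)*exp x :=
  level 4 (-12) 2 8 12 8 (-20) 2 12 20 (by norm_num) (by norm_num) (by norm_num) (by norm_num) (by norm_num) (by norm_num) f3_pos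

lemma f1_pos : ∀ x, 0 < x →
    0 < ((2:ℝ)*x + (-7))*(exp x)^2 + (2*x^2 + 4*x + 8)*exp x + (-1) := by
  apply pos_of_deriv_pos _ (fun x => ((4:ℝ)*x + (-12))*(exp x)^2 + (2*x^2 + 8*x + 12)*exp x)
  · intro x
    have h := (hasDerivAt_shape 2 (-7) 2 4 8 x).add_const (-1)
    exact h.congr_deriv (by ring)
  · simp [Real.exp_zero]; norm_num
  · exact f2_pos

lemma f0_pos : ∀ x, 0 < x →
    0 < ((1:ℝ)*x + (-4))*(exp x)^2 + (2*x^2 + 0*x + 8)*exp x + ((-1)*x + (-4)) := by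
  apply pos_of_deriv_pos _ (fun x => ((2:ℝ)*x + (-7))*(exp x)^2 + (2*x^2 + 4*x + 8)*exp x + (-1))
  · intro x
    have hlin : HasDerivAt (fun y : ℝ => (-1)*y + (-4)) (-1) x := by
      simpa using ((hasDerivAt_id x).const_mul (-1 : ℝ)).add_const (-4 : ℝ)
    have h := (hasDerivAt_shape 1 (-4) 2 0 8 x).add hlin
    exact h.congr_deriv (by ring)
  · simp [Real.exp_zero]; norm_num
  · exact f1_pos

lemma f_pos (x : ℝ) (hx : 0 < x) :
    0 < x*((exp x)^2 - 1) + 2*x^2*exp x - 4*(exp x - 1)^2 := by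
  have := f0_pos x hx
  nlinarith [this]

lemma G_anti : StrictAntiOn (fun x : ℝ => (1/(exp x - 1) - 1/x + 1/2)/x) (Set.Ioi 0) := by
  have hderiv : ∀ x : ℝ, 0 < x → HasDerivAt (fun y : ℝ => (1/(exp y - 1) - 1/y + 1/2)/y)
      ((((-exp x/(exp x - 1)^2) + 1/x^2) * x - (1/(exp x - 1) - 1/x + 1/2)) / x^2) x := by
    intro x hx
    have he1 : (1:ℝ) < exp x := by
      have := Real.add_one_le_exp x; nlinarith
    have hne : exp x - 1 ≠ 0 := by linarith
    have hxne : x ≠ 0 := ne_of_gt hx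
    have h1 : HasDerivAt (fun y : ℝ => exp y - 1) (exp x) x := (Real.hasDerivAt_exp x).sub_const 1
    have h2 : HasDerivAt (fun y : ℝ => 1/(exp y - 1)) (-exp x/(exp x - 1)^2) x := by
      rw [show (fun y : ℝ => 1/(exp y - 1)) = (fun y => exp y - 1)⁻¹ from by ext; simp]
      exact h1.inv hne
    have h3 : HasDerivAt (fun y : ℝ => 1/y) (-(1/x^2)) x := by
      simpa [one_div] using hasDerivAt_inv hxne
    have hH : HasDerivAt (fun y : ℝ => 1/(exp y - 1) - 1/y + 1/2)
        ((-exp x/(exp x - 1)^2) + 1/x^2) x := by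
      have := (h2.sub h3).add_const (1/2)
      refine this.congr_deriv ?_
      ring
    have := hH.div (hasDerivAt_id x) hxne
    refine this.congr_deriv ?_
    simp
  apply strictAntiOn_of_deriv_neg (convex_Ioi 0)
  · intro x hx
    exact (hderiv x hx).continuousAt.continuousWithinAt
  · intro x hx
    rw [interior_Ioi] at hx
    have hx' : 0 < x := hx
    rw [(hderiv x hx').deriv]
    have he1 : (1:ℝ) < exp x := by
      have := Real.add_one_le_exp x; nlinarith
    have hne : exp x - 1 ≠ 0 := by linarith
    have hxne : x ≠ 0 := ne_of_gt hx'
    apply div_neg_of_neg_of_pos _ (by positivity)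
    have key := f_pos x hx
    have hrw : ((-exp x/(exp x - 1)^2) + 1/x^2) * x - (1/(exp x - 1) - 1/x + 1/2)
        = -(x*((exp x)^2 - 1) + 2*x^2*exp x - 4*(exp x - 1)^2) / (2*x*(exp x - 1)^2) := by
      field_simp
      ring
    rw [hrw]
    apply div_neg_of_neg_of_pos
    · linarith
    · have h2 : (0:ℝ) < (exp x - 1)^2 := by positivity
      have := mul_pos (by linarith : (0:ℝ) < 2*x) h2
      linarith

lemma delta_rw (a b t : ℝ) (hab : a < b) (ht : 0 < t) :
    (b * exp (b*t) - a * exp (a*t)) / (exp (b*t) - exp (a*t))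
      = b + (b-a)/(exp ((b-a)*t) - 1) := by
  have h1 : exp (b*t) = exp (a*t) * exp ((b-a)*t) := by
    rw [← Real.exp_add]; ring_nf
  have hc : 0 < (b-a)*t := mul_pos (by linarith) ht
  have he : 1 < exp ((b-a)*t) := by
    have := Real.add_one_le_exp ((b-a)*t); nlinarith
  have hea : 0 < exp (a*t) := exp_pos _
  have hne2 : exp ((b-a)*t) - 1 ≠ 0 := by linarith
  have hne1 : exp (a*t) * exp ((b-a)*t) - exp (a*t) ≠ 0 := by
    have : 0 < exp (a*t) * (exp ((b-a)*t) - 1) := mul_pos hea (by linarith)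
    nlinarith
  rw [h1, div_eq_iff hne1]
  have hE : (b-a)/(exp ((b-a)*t) - 1) * (exp ((b-a)*t) - 1) = b - a := div_mul_cancel₀ _ hne2
  linear_combination (-(exp (a*t))) * hE

theorem neg_delta_star_shaped (a b : ℝ) (hab : a < b) (hsum : 0 ≤ a + b)
    (τ : ℝ) (hτ0 : 0 < τ) (hτ1 : τ < 1) (t : ℝ) (ht : 0 < t) :
    τ * ((b * Real.exp (b * t) - a * Real.exp (a * t)) /
        (Real.exp (b * t) - Real.exp (a * t)) - 1 / t) <
      (b * Real.exp (b * (τ * t)) - a * Real.exp (a * (τ * t))) /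
        (Real.exp (b * (τ * t)) - Real.exp (a * (τ * t))) - 1 / (τ * t) := by
  have hτt : 0 < τ * t := mul_pos hτ0 ht
  rw [delta_rw a b t hab ht, delta_rw a b (τ*t) hab hτt]
  have hc : 0 < b - a := by linarith
  set s := (b-a)*t with hs_def
  set u := (b-a)*(τ*t) with hu_def
  have hs : 0 < s := mul_pos hc ht
  have hu : 0 < u := mul_pos hc hτt
  have hus : u < s := by
    have h1 : 0 < (b-a)*t*(1-τ) := mul_pos (mul_pos hc ht) (by linarith)
    rw [hs_def, hu_def]; nlinarith
  have hGanti := G_anti (Set.mem_Ioi.mpr hu) (Set.mem_Ioi.mpr hs) hus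
  simp only [] at hGanti
  rw [div_lt_div_iff₀ hs hu] at hGanti
  have hu_eq : u = τ * s := by rw [hs_def, hu_def]; ring
  rw [hu_eq] at hGanti
  have key : τ * (1/(exp s - 1) - 1/s + 1/2) < 1/(exp (τ*s) - 1) - 1/(τ*s) + 1/2 := by
    have h2 : (τ * (1/(exp s - 1) - 1/s + 1/2)) * s
        < (1/(exp (τ*s) - 1) - 1/(τ*s) + 1/2) * s := by nlinarith [hGanti]
    exact lt_of_mul_lt_mul_right h2 hs.le
  rw [← hu_eq] at key
  have e1 : 1/t = (b-a) * (1/s) := by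
    rw [hs_def]; field_simp
  have e2 : 1/(τ*t) = (b-a) * (1/u) := by
    rw [hu_def]; field_simp
  rw [e1, e2]
  have gs : (b-a)/(exp s - 1) = (b-a) * (1/(exp s - 1)) := by ring
  have gu : (b-a)/(exp u - 1) = (b-a) * (1/(exp u - 1)) := by ring
  rw [gs, gu]
  have hpos : 0 ≤ (1-τ) * (a+b) := mul_nonneg (by linarith) hsum
  generalize 1/(exp s - 1) = X at key ⊢
  generalize 1/(exp u - 1) = Y at key ⊢
  generalize (1:ℝ)/s = P at key ⊢
  generalize (1:ℝ)/u = Q at key ⊢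
  have hkey' := mul_lt_mul_of_pos_left key hc
  linarith [hkey', hpos]
end

section
/- For real numbers a < b with max{a, b} = b ≤ 0 and any 0 < τ < 1, the inequality δ_{a,b}(τt) < τ·δ_{a,b}(t) holds for all t > 0; that is, δ_{a,b} is star-shaped on (0, ∞). -/
open Real

lemma key_ineq_s11 (s : ℝ) (hs : 0 < s) :
    s * (exp s - 1) + s^2 * exp s < 2 * (exp s - 1)^2 := by
  set u := exp (s/2) with hu
  have hu0 : 0 < u := exp_pos _
  have hus : exp s = u^2 := by rw [hu, sq, ← exp_add]; ring_nf
  have hA : u^2 - 1 ≤ s * u^2 := by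
    have h1 : -s + 1 ≤ exp (-s) := add_one_le_exp (-s)
    have h2 : exp (-s) = (u^2)⁻¹ := by rw [exp_neg, hus]
    rw [h2] at h1
    have := mul_le_mul_of_nonneg_right h1 (le_of_lt (by positivity : (0:ℝ) < u^2))
    rw [inv_mul_cancel₀ (by positivity)] at this
    nlinarith
  have hB : s * u < u^2 - 1 := by
    have h1 : s/2 < sinh (s/2) := self_lt_sinh_iff.mpr (by linarith)
    have h2 : sinh (s/2) = (u - u⁻¹)/2 := by
      rw [sinh_eq, hu, exp_neg]
    rw [h2] at h1
    have h3 : s < u - u⁻¹ := by linarith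
    have := mul_lt_mul_of_pos_right h3 hu0
    rw [sub_mul, inv_mul_cancel₀ (ne_of_gt hu0)] at this
    nlinarith
  have h4 : (s*u)^2 < (u^2-1)^2 := by
    have h5 : 0 < s * u := mul_pos hs hu0
    exact pow_lt_pow_left₀ hB h5.le two_ne_zero
  rw [hus]
  nlinarith [mul_le_mul_of_nonneg_left hA hs.le]
open Real Set

noncomputable def Gfun (s : ℝ) : ℝ := s⁻¹ * s⁻¹ - s⁻¹ * (Real.exp s - 1)⁻¹

lemma exp_sub_one_pos {s : ℝ} (hs : 0 < s) : 0 < Real.exp s - 1 := by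
  have : 1 < Real.exp s := by rw [← Real.exp_zero]; exact Real.exp_lt_exp.mpr hs
  linarith

lemma G_hasDeriv (s : ℝ) (hs : 0 < s) :
    HasDerivAt Gfun
      ((-(s^2)⁻¹) * s⁻¹ + s⁻¹ * (-(s^2)⁻¹)
        - ((-(s^2)⁻¹) * (Real.exp s - 1)⁻¹
           + s⁻¹ * (-(Real.exp s) / (Real.exp s - 1)^2))) s := by
  have hne : s ≠ 0 := hs.ne'
  have hE : Real.exp s - 1 ≠ 0 := (exp_sub_one_pos hs).ne'
  have h1 : HasDerivAt (fun x : ℝ => x⁻¹) (-(s^2)⁻¹) s := hasDerivAt_inv hne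
  have h2 : HasDerivAt (fun x : ℝ => (Real.exp x - 1)⁻¹)
      (-(Real.exp s) / (Real.exp s - 1)^2) s := by
    have := ((Real.hasDerivAt_exp s).sub_const 1).inv hE
    exact this
  exact (h1.mul h1).sub (h1.mul h2)

lemma G_anti_s11 : StrictAntiOn Gfun (Ioi (0:ℝ)) := by
  apply strictAntiOn_of_deriv_neg (convex_Ioi 0)
  · intro x hx
    exact (G_hasDeriv x hx).differentiableAt.continuousAt.continuousWithinAt
  · intro x hx
    rw [interior_Ioi] at hx
    have hx0 : (0:ℝ) < x := hx
    rw [(G_hasDeriv x hx0).deriv]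
    have hE := exp_sub_one_pos hx0
    have hk := key_ineq_s11 x hx0
    have heq : (-(x^2)⁻¹) * x⁻¹ + x⁻¹ * (-(x^2)⁻¹)
        - ((-(x^2)⁻¹) * (Real.exp x - 1)⁻¹
           + x⁻¹ * (-(Real.exp x) / (Real.exp x - 1)^2))
        = (x * (Real.exp x - 1) + x^2 * Real.exp x - 2 * (Real.exp x - 1)^2)
            / (x^3 * (Real.exp x - 1)^2) := by
      field_simp
      ring
    rw [heq]
    apply div_neg_of_neg_of_pos
    · linarith
    · positivity

lemma delta_eq (a b t : ℝ) (hab : a < b) (ht : 0 < t) :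
    (b * Real.exp (b * t) - a * Real.exp (a * t)) /
        (Real.exp (b * t) - Real.exp (a * t)) - 1 / t
      = b - (b - a)^2 * t * Gfun ((b - a) * t) := by
  have hE : Real.exp (a * t) < Real.exp (b * t) :=
    Real.exp_lt_exp.mpr (by nlinarith)
  have hE' : Real.exp (b * t) - Real.exp (a * t) ≠ 0 := by linarith [hE]
  have hc : 0 < (b - a) * t := by nlinarith
  have hE2 : Real.exp ((b - a) * t) - 1 ≠ 0 := (exp_sub_one_pos hc).ne'
  have he : Real.exp ((b - a) * t) = Real.exp (b * t) * (Real.exp (a * t))⁻¹ := by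
    rw [← Real.exp_neg, ← Real.exp_add]; ring_nf
  unfold Gfun
  rw [he] at hE2 ⊢
  have ha0 : Real.exp (a * t) ≠ 0 := (Real.exp_pos _).ne'
  have hba : b - a ≠ 0 := by linarith
  have ht0 : t ≠ 0 := ht.ne'
  field_simp
  ring_nf
  have hD : rexp (t*b) - rexp (t*a) ≠ 0 := by rw [mul_comm t b, mul_comm t a]; exact hE'
  field_simp
  ring
theorem delta_star_shaped (a b : ℝ) (hab : a < b) (hb : b ≤ 0)
    (τ : ℝ) (hτ0 : 0 < τ) (hτ1 : τ < 1) (t : ℝ) (ht : 0 < t) :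
    (b * Real.exp (b * (τ * t)) - a * Real.exp (a * (τ * t))) /
        (Real.exp (b * (τ * t)) - Real.exp (a * (τ * t))) - 1 / (τ * t) <
      τ * ((b * Real.exp (b * t) - a * Real.exp (a * t)) /
        (Real.exp (b * t) - Real.exp (a * t)) - 1 / t) := by
  have hτt : 0 < τ * t := mul_pos hτ0 ht
  rw [delta_eq a b (τ * t) hab hτt, delta_eq a b t hab ht]
  have hc : 0 < b - a := sub_pos.mpr hab
  have h1 : 0 < (b - a) * (τ * t) := mul_pos hc hτt
  have h2 : 0 < (b - a) * t := mul_pos hc ht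
  have hlt : (b - a) * (τ * t) < (b - a) * t := by nlinarith
  have hG : Gfun ((b - a) * t) < Gfun ((b - a) * (τ * t)) :=
    G_anti_s11 (Set.mem_Ioi.mpr h1) (Set.mem_Ioi.mpr h2) hlt
  have hpos : 0 < (b - a)^2 * (τ * t) * (Gfun ((b - a) * (τ * t)) - Gfun ((b - a) * t)) := by
    apply mul_pos (by positivity) (by linarith)
  have hbτ : 0 ≤ (τ - 1) * b := by nlinarith
  nlinarith [hpos, hbτ]
end
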